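/- Let φ : Fin N × Fin M → ℝ, b ∈ ℝ, and φ₊ = max(φ − b, 0) pointwise. With the cell-centered finite difference Laplacian Δ_h, discrete gradient ∇_h, discrete L² inner product ⟨·,·⟩ and homogeneous Neumann boundary conditions, ‖∇_h φ₊‖² ≤ −⟨Δ_h φ, φ₊⟩. -/
import Mathlib

noncomputable def gradX {N M : ℕ} (h : ℝ) (φ : Fin N × Fin M → ℝ)
    (p : Fin (N + 1) × Fin M) : ℝ :=
  if hp : 0 < p.1.val ∧ p.1.val < N then
    (φ (⟨p.1.val, hp.2⟩, p.2) - φ (⟨p.1.val - 1, by omega⟩, p.2)) / h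
  else 0

noncomputable def gradY {N M : ℕ} (h : ℝ) (φ : Fin N × Fin M → ℝ)
    (p : Fin N × Fin (M + 1)) : ℝ :=
  if hp : 0 < p.2.val ∧ p.2.val < M then
    (φ (p.1, ⟨p.2.val, hp.2⟩) - φ (p.1, ⟨p.2.val - 1, by omega⟩)) / h
  else 0

/-- Cell-centered five-point discrete Laplacian with homogeneous Neumann
boundary conditions (boundary fluxes vanish). -/
noncomputable def discLap {N M : ℕ} (h : ℝ) (φ : Fin N × Fin M → ℝ)
    (p : Fin N × Fin M) : ℝ :=
  (gradX h φ (p.1.succ, p.2) - gradX h φ (p.1.castSucc, p.2)) / h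
    + (gradY h φ (p.1, p.2.succ) - gradY h φ (p.1, p.2.castSucc)) / h

/-- Discrete L² inner product. -/
noncomputable def discInner {N M : ℕ} (h : ℝ) (φ ψ : Fin N × Fin M → ℝ) : ℝ :=
  h ^ 2 * ∑ p : Fin N × Fin M, φ p * ψ p

/-- Discrete H¹ seminorm squared: ‖∇ₕφ‖². -/
noncomputable def discGradNormSq {N M : ℕ} (h : ℝ) (φ : Fin N × Fin M → ℝ) : ℝ :=
  h ^ 2 * ((∑ p : Fin (N + 1) × Fin M, gradX h φ p ^ 2)
    + ∑ p : Fin N × Fin (M + 1), gradY h φ p ^ 2)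

/-- 1D summation-by-parts with vanishing boundary fluxes. -/
lemma sbp_1d (N : ℕ) (a c Ψ : ℕ → ℝ) (ha0 : a 0 = 0) (haN : a N = 0)
    (hc : ∀ i, c i = if 0 < i ∧ i < N then Ψ i - Ψ (i - 1) else 0) :
    ∑ i ∈ Finset.range N, (a (i + 1) - a i) * Ψ i
      = - ∑ i ∈ Finset.range (N + 1), a i * c i := by
  rcases Nat.eq_zero_or_pos N with rfl | hN
  · simp [hc, ha0]
  have h1 : ∑ i ∈ Finset.range (N + 1), a i * c i
      = ∑ i ∈ Finset.Ico 1 N, (a i * Ψ i - a i * Ψ (i - 1)) := by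
    rw [← Finset.sum_filter_add_sum_filter_not (Finset.range (N + 1))
      (fun i => 0 < i ∧ i < N)]
    have e1 : Finset.filter (fun i => 0 < i ∧ i < N) (Finset.range (N + 1))
        = Finset.Ico 1 N := by
      ext i; simp [Finset.mem_filter, Finset.mem_Ico]; omega
    rw [e1]
    have e2 : ∑ i ∈ Finset.filter (fun i => ¬(0 < i ∧ i < N)) (Finset.range (N + 1)),
        a i * c i = 0 := by
      apply Finset.sum_eq_zero
      intro i hi
      simp only [Finset.mem_filter] at hi
      rw [hc i, if_neg hi.2, mul_zero]
    rw [e2, add_zero]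
    apply Finset.sum_congr rfl
    intro i hi
    simp only [Finset.mem_Ico] at hi
    rw [hc i, if_pos ⟨hi.1, hi.2⟩, mul_sub]
  have h2 : ∑ i ∈ Finset.Ico 1 N, a i * Ψ i = ∑ i ∈ Finset.range N, a i * Ψ i := by
    rw [Finset.sum_range_eq_add_Ico _ hN, ha0, zero_mul, zero_add]
  have h3 : ∑ i ∈ Finset.Ico 1 N, a i * Ψ (i - 1)
      = ∑ i ∈ Finset.range N, a (i + 1) * Ψ i := by
    rw [Finset.sum_Ico_eq_sum_range]
    obtain ⟨K, rfl⟩ : ∃ K, N = K + 1 := ⟨N - 1, by omega⟩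
    rw [Finset.sum_range_succ, haN, zero_mul, add_zero]
    apply Finset.sum_congr (by simp) 
    intro i _
    congr 1
    · congr 1; omega
    · congr 1; omega
  rw [h1, Finset.sum_sub_distrib, h2, h3]
  simp only [sub_mul, Finset.sum_sub_distrib]
  ring

lemma sbpX {N M : ℕ} (h : ℝ) (hh : h ≠ 0) (φ ψ : Fin N × Fin M → ℝ) :
    ∑ p : Fin N × Fin M,
        (gradX h φ (p.1.succ, p.2) - gradX h φ (p.1.castSucc, p.2)) * ψ p
      = - ∑ q : Fin (N + 1) × Fin M, gradX h φ q * (h * gradX h ψ q) := by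
  rw [Fintype.sum_prod_type_right, Fintype.sum_prod_type_right, ← Finset.sum_neg_distrib]
  apply Finset.sum_congr rfl
  intro j _
  set a : ℕ → ℝ := fun i => if hi : i < N + 1 then gradX h φ (⟨i, hi⟩, j) else 0 with ha
  set c : ℕ → ℝ := fun i => if hi : i < N + 1 then h * gradX h ψ (⟨i, hi⟩, j) else 0 with hcdef
  set Ψ : ℕ → ℝ := fun i => if hi : i < N then ψ (⟨i, hi⟩, j) else 0 with hΨ
  have ha0 : a 0 = 0 := by simp [ha, gradX]
  have haN : a N = 0 := by simp [ha, gradX]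
  have hc : ∀ i, c i = if 0 < i ∧ i < N then Ψ i - Ψ (i - 1) else 0 := by
    intro i
    by_cases hi : 0 < i ∧ i < N
    · have hi1 : i < N + 1 := by omega
      rw [if_pos hi]
      simp only [hcdef, dif_pos hi1, gradX, hΨ]
      rw [dif_pos (show 0 < (⟨i, hi1⟩ : Fin (N+1)).val ∧ (⟨i, hi1⟩ : Fin (N+1)).val < N from hi)]
      rw [mul_div_cancel₀ _ hh]
      rw [dif_pos hi.2, dif_pos (show i - 1 < N by omega)]
    · rw [if_neg hi]
      simp only [hcdef]
      split
      · rw [gradX, dif_neg hi, mul_zero]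
      · rfl
  have key := sbp_1d N a c Ψ ha0 haN hc
  have lhs : ∑ p : Fin N, (gradX h φ (p.succ, j) - gradX h φ (p.castSucc, j)) * ψ (p, j)
      = ∑ i ∈ Finset.range N, (a (i + 1) - a i) * Ψ i := by
    rw [← Fin.sum_univ_eq_sum_range]
    apply Finset.sum_congr rfl
    intro i _
    have h1 : a (↑i + 1) = gradX h φ (i.succ, j) := by
      simp only [ha, dif_pos (show (i : ℕ) + 1 < N + 1 by omega)]
      congr 1
    have h2 : a ↑i = gradX h φ (i.castSucc, j) := by
      simp only [ha, dif_pos (show (i : ℕ) < N + 1 by omega)]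
      congr 1
    have h3 : Ψ ↑i = ψ (i, j) := by
      simp only [hΨ, dif_pos i.isLt]
    rw [h1, h2, h3]
  have rhs : ∑ q : Fin (N + 1), gradX h φ (q, j) * (h * gradX h ψ (q, j))
      = ∑ i ∈ Finset.range (N + 1), a i * c i := by
    rw [← Fin.sum_univ_eq_sum_range]
    apply Finset.sum_congr rfl
    intro i _
    simp only [ha, hcdef, dif_pos i.isLt]
  rw [lhs, rhs, key]

lemma sbpY {N M : ℕ} (h : ℝ) (hh : h ≠ 0) (φ ψ : Fin N × Fin M → ℝ) :
    ∑ p : Fin N × Fin M,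
        (gradY h φ (p.1, p.2.succ) - gradY h φ (p.1, p.2.castSucc)) * ψ p
      = - ∑ q : Fin N × Fin (M + 1), gradY h φ q * (h * gradY h ψ q) := by
  rw [Fintype.sum_prod_type, Fintype.sum_prod_type, ← Finset.sum_neg_distrib]
  apply Finset.sum_congr rfl
  intro j _
  set a : ℕ → ℝ := fun i => if hi : i < M + 1 then gradY h φ (j, ⟨i, hi⟩) else 0 with ha
  set c : ℕ → ℝ := fun i => if hi : i < M + 1 then h * gradY h ψ (j, ⟨i, hi⟩) else 0 with hcdef
  set Ψ : ℕ → ℝ := fun i => if hi : i < M then ψ (j, ⟨i, hi⟩) else 0 with hΨ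
  have ha0 : a 0 = 0 := by simp [ha, gradY]
  have haM : a M = 0 := by simp [ha, gradY]
  have hc : ∀ i, c i = if 0 < i ∧ i < M then Ψ i - Ψ (i - 1) else 0 := by
    intro i
    by_cases hi : 0 < i ∧ i < M
    · have hi1 : i < M + 1 := by omega
      rw [if_pos hi]
      simp only [hcdef, dif_pos hi1, gradY, hΨ]
      rw [dif_pos (show 0 < (⟨i, hi1⟩ : Fin (M+1)).val ∧ (⟨i, hi1⟩ : Fin (M+1)).val < M from hi)]
      rw [mul_div_cancel₀ _ hh]
      rw [dif_pos hi.2, dif_pos (show i - 1 < M by omega)]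
    · rw [if_neg hi]
      simp only [hcdef]
      split
      · rw [gradY, dif_neg hi, mul_zero]
      · rfl
  have key := sbp_1d M a c Ψ ha0 haM hc
  have lhs : ∑ p : Fin M, (gradY h φ (j, p.succ) - gradY h φ (j, p.castSucc)) * ψ (j, p)
      = ∑ i ∈ Finset.range M, (a (i + 1) - a i) * Ψ i := by
    rw [← Fin.sum_univ_eq_sum_range]
    apply Finset.sum_congr rfl
    intro i _
    have h1 : a (↑i + 1) = gradY h φ (j, i.succ) := by
      simp only [ha, dif_pos (show (i : ℕ) + 1 < M + 1 by omega)]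
      congr 1
    have h2 : a ↑i = gradY h φ (j, i.castSucc) := by
      simp only [ha, dif_pos (show (i : ℕ) < M + 1 by omega)]
      congr 1
    have h3 : Ψ ↑i = ψ (j, i) := by
      simp only [hΨ, dif_pos i.isLt]
    rw [h1, h2, h3]
  have rhs : ∑ q : Fin (M + 1), gradY h φ (j, q) * (h * gradY h ψ (j, q))
      = ∑ i ∈ Finset.range (M + 1), a i * c i := by
    rw [← Fin.sum_univ_eq_sum_range]
    apply Finset.sum_congr rfl
    intro i _
    simp only [ha, hcdef, dif_pos i.isLt]
  rw [lhs, rhs, key]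

lemma inner_lap {N M : ℕ} (h : ℝ) (hh : h ≠ 0) (φ ψ : Fin N × Fin M → ℝ) :
    discInner h (discLap h φ) ψ
      = - (h ^ 2 * ((∑ q : Fin (N + 1) × Fin M, gradX h φ q * gradX h ψ q)
          + ∑ q : Fin N × Fin (M + 1), gradY h φ q * gradY h ψ q)) := by
  have e1 : ∑ p : Fin N × Fin M, discLap h φ p * ψ p
      = (∑ p : Fin N × Fin M,
          (gradX h φ (p.1.succ, p.2) - gradX h φ (p.1.castSucc, p.2)) * ψ p) / h
        + (∑ p : Fin N × Fin M,
          (gradY h φ (p.1, p.2.succ) - gradY h φ (p.1, p.2.castSucc)) * ψ p) / h := by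
    rw [Finset.sum_div, Finset.sum_div, ← Finset.sum_add_distrib]
    apply Finset.sum_congr rfl
    intro p _
    rw [discLap]
    ring
  have e2 : ∑ q : Fin (N + 1) × Fin M, gradX h φ q * (h * gradX h ψ q)
      = h * ∑ q : Fin (N + 1) × Fin M, gradX h φ q * gradX h ψ q := by
    rw [Finset.mul_sum]; apply Finset.sum_congr rfl; intro q _; ring
  have e3 : ∑ q : Fin N × Fin (M + 1), gradY h φ q * (h * gradY h ψ q)
      = h * ∑ q : Fin N × Fin (M + 1), gradY h φ q * gradY h ψ q := by
    rw [Finset.mul_sum]; apply Finset.sum_congr rfl; intro q _; ring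
  rw [discInner, e1, sbpX h hh, sbpY h hh, e2, e3]
  field_simp
  ring

lemma trunc_ineq (x y b : ℝ) :
    (max (x - b) 0 - max (y - b) 0) ^ 2 ≤ (x - y) * (max (x - b) 0 - max (y - b) 0) := by
  rcases le_total (x - b) 0 with h1 | h1 <;> rcases le_total (y - b) 0 with h2 | h2
  · simp [max_eq_right h1, max_eq_right h2]
  · rw [max_eq_right h1, max_eq_left h2]; nlinarith
  · rw [max_eq_left h1, max_eq_right h2]; nlinarith
  · rw [max_eq_left h1, max_eq_left h2]; nlinarith

theorem discrete_laplacian_truncation_above {N M : ℕ} (h : ℝ) (hh : 0 < h)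
    (φ : Fin N × Fin M → ℝ) (b : ℝ) :
    discGradNormSq h (fun p => max (φ p - b) 0) ≤
      - discInner h (discLap h φ) (fun p => max (φ p - b) 0) := by
  set ψ : Fin N × Fin M → ℝ := fun p => max (φ p - b) 0 with hψ
  rw [inner_lap h hh.ne' φ ψ, neg_neg, discGradNormSq]
  apply mul_le_mul_of_nonneg_left _ (by positivity)
  apply add_le_add
  · apply Finset.sum_le_sum
    intro q _
    rw [gradX, gradX]
    split
    · rename_i hq
      rw [hψ]
      rw [div_pow, div_mul_div_comm, show h * h = h ^ 2 by ring]
      gcongr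
      exact trunc_ineq _ _ _
    · simp
  · apply Finset.sum_le_sum
    intro q _
    rw [gradY, gradY]
    split
    · rename_i hq
      rw [hψ]
      rw [div_pow, div_mul_div_comm, show h * h = h ^ 2 by ring]
      gcongr
      exact trunc_ineq _ _ _
    · simp
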